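/- Let q be a prime power and let ζ be a generator of F_{q²}^×. Then the set S = { ζ^i : 0 < i ≤ (q+1)/2 } (indices taken over integers i in that range) is a complete set of unique representatives for the equivalence relation on F_{q²} \ F_q generated by multiplication by elements of F_q^× and inversion: every element of F_{q²} \ F_q can be written as c·σ or c·σ⁻¹ for a unique σ ∈ S ∩ (F_{q²}\F_q) and some c ∈ F_q^×, and no two distinct elements of S ∩ (F_{q²}\F_q) are equivalent. -/

import Mathlib

lemma zpow_mem_range_iff
    {F : Type*} [Field F] [Fintype F] (q : ℕ) (hq : Fintype.card F = q)
    {K : Type*} [Field K] [Fintype K] [Algebra F K]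
    (hK : Fintype.card K = q ^ 2)
    (ζ : Kˣ) (hζ : ∀ x : Kˣ, x ∈ Subgroup.zpowers ζ) (m : ℤ) :
    ((ζ ^ m : Kˣ) : K) ∈ Set.range (algebraMap F K) ↔ ((q : ℤ) + 1) ∣ m := by
  classical
  have hq2 : 2 ≤ q := hq ▸ Fintype.one_lt_card
  have hord : orderOf ζ = q ^ 2 - 1 := by
    rw [orderOf_eq_card_of_forall_mem_zpowers hζ, Nat.card_eq_fintype_card,
      Fintype.card_units, hK]
  have hfac : q ^ 2 - 1 = (q + 1) * (q - 1) := by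
    obtain ⟨n, rfl⟩ : ∃ n, q = n + 2 := ⟨q - 2, by omega⟩
    have h1 : (n + 2) ^ 2 = (n + 3) * (n + 1) + 1 := by ring
    have h2 : n + 2 + 1 = n + 3 := rfl
    have h3 : n + 2 - 1 = n + 1 := rfl
    rw [h1, h2, h3]
    omega
  have hinj : Function.Injective (algebraMap F K) := (algebraMap F K).injective
  set f : Fˣ →* Kˣ := Units.map (algebraMap F K : F →+* K) with hf
  have hfinj : Function.Injective f := Units.map_injective hinj
  -- every element of the range of f satisfies x ^ (q-1) = 1
  have hHpow : ∀ c : Fˣ, (f c) ^ (q - 1) = 1 := by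
    intro c
    have hcF : (c : F) ^ (q - 1) = 1 := by
      have := FiniteField.pow_card_sub_one_eq_one (c : F) c.ne_zero
      rwa [hq] at this
    ext
    have hval : ((f c : Kˣ) : K) = algebraMap F K (c : F) := rfl
    push_cast
    rw [hval, ← map_pow, hcF, map_one]
  have hZle : ∀ x : Kˣ, x ^ (q - 1) = 1 → x ∈ Subgroup.zpowers (ζ ^ (q + 1)) := by
    intro x hx
    obtain ⟨m, rfl⟩ := hζ x
    have h1 : (ζ ^ m) ^ ((q : ℤ) - 1) = 1 := by
      have : ((q : ℤ) - 1) = ((q - 1 : ℕ) : ℤ) := by omega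
      rw [this, zpow_natCast]; exact hx
    rw [← zpow_mul] at h1
    have h2 : ((q ^ 2 - 1 : ℕ) : ℤ) ∣ m * ((q : ℤ) - 1) := by
      rw [← hord]; exact orderOf_dvd_iff_zpow_eq_one.mpr h1
    have h3 : (((q : ℤ) + 1) * ((q : ℤ) - 1)) ∣ m * ((q : ℤ) - 1) := by
      have : ((q ^ 2 - 1 : ℕ) : ℤ) = ((q : ℤ) + 1) * ((q : ℤ) - 1) := by
        rw [hfac]; push_cast [Nat.cast_sub (show 1 ≤ q by omega)]; ring
      rwa [this] at h2
    have h4 : ((q : ℤ) + 1) ∣ m := by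
      have hne : ((q : ℤ) - 1) ≠ 0 := by omega
      exact (mul_dvd_mul_iff_right hne).mp h3
    obtain ⟨j, rfl⟩ := h4
    refine Subgroup.mem_zpowers_iff.mpr ⟨j, ?_⟩
    rw [← zpow_natCast ζ (q + 1), ← zpow_mul]
    push_cast
    ring_nf
  have hHZ : f.range = Subgroup.zpowers (ζ ^ (q + 1)) := by
    apply Subgroup.eq_of_le_of_card_ge
    · rintro x ⟨c, rfl⟩
      exact hZle _ (hHpow c)
    · have hZcard : Nat.card (Subgroup.zpowers (ζ ^ (q + 1))) = q - 1 := by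
        rw [Nat.card_zpowers, orderOf_pow, hord]
        have hgcd : Nat.gcd (q ^ 2 - 1) (q + 1) = q + 1 :=
          Nat.gcd_eq_right ⟨q - 1, hfac⟩
        rw [hgcd, hfac, Nat.mul_div_cancel_left _ (by omega)]
      have hHcard : Nat.card f.range = q - 1 := by
        rw [← Nat.card_congr (MonoidHom.ofInjective hfinj).toEquiv,
          Nat.card_eq_fintype_card, Fintype.card_units, hq]
      rw [hZcard, hHcard]
  constructor
  · rintro ⟨c, hc⟩
    have hc0 : c ≠ 0 := by
      rintro rfl
      simp only [map_zero] at hc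
      exact (ζ ^ m).ne_zero hc.symm
    have hmem : ζ ^ m ∈ f.range := by
      refine ⟨Units.mk0 c hc0, ?_⟩
      ext
      exact hc
    rw [hHZ] at hmem
    obtain ⟨j, hj⟩ := hmem
    have : ζ ^ ((q + 1 : ℕ) * j) = ζ ^ m := by
      rw [zpow_mul, zpow_natCast]; exact hj
    have hdvd : ((q ^ 2 - 1 : ℕ) : ℤ) ∣ (q + 1 : ℕ) * j - m := by
      rw [← hord]
      rw [orderOf_dvd_iff_zpow_eq_one, zpow_sub, this]
      simp
    have h5 : ((q : ℤ) + 1) ∣ ((q + 1 : ℕ) : ℤ) * j - m := by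
      refine dvd_trans ?_ hdvd
      refine ⟨(q : ℤ) - 1, ?_⟩
      rw [hfac]; push_cast [Nat.cast_sub (show 1 ≤ q by omega)]; ring
    have h6 : ((q : ℤ) + 1) ∣ ((q + 1 : ℕ) : ℤ) * j := ⟨j, by push_cast; ring⟩
    have := dvd_sub h6 h5
    simpa using this
  · rintro ⟨j, rfl⟩
    have hmem : ζ ^ (((q : ℤ) + 1) * j) ∈ f.range := by
      rw [hHZ]
      refine Subgroup.mem_zpowers_iff.mpr ⟨j, ?_⟩
      rw [← zpow_natCast ζ (q + 1), ← zpow_mul]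
      push_cast
      ring_nf
    obtain ⟨c, hc⟩ := hmem
    exact ⟨(c : F), by rw [← hc]; rfl⟩

lemma int_eq_zero_of_dvd {n d : ℤ} (hn : 0 < n) (h : n ∣ d) (h1 : -n < d) (h2 : d < n) :
    d = 0 := by
  obtain ⟨t, rfl⟩ := h
  rcases lt_trichotomy t 0 with h' | h' | h'
  · exfalso; nlinarith
  · simp [h']
  · exfalso; nlinarith

lemma int_eq_of_dvd {n d : ℤ} (hn : 0 < n) (h : n ∣ d) (h1 : 0 < d) (h2 : d < 2 * n) :
    d = n := by
  obtain ⟨t, rfl⟩ := h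
  have : t = 1 := by
    rcases lt_trichotomy t 1 with h' | h' | h'
    · exfalso; nlinarith
    · exact h'
    · exfalso; nlinarith
  rw [this, mul_one]

theorem representatives_up_to_scaling_and_inversion
    {F : Type*} [Field F] [Fintype F] (q : ℕ) (hq : Fintype.card F = q)
    {K : Type*} [Field K] [Fintype K] [Algebra F K]
    (hK : Fintype.card K = q ^ 2)
    (ζ : Kˣ) (hζ : ∀ x : Kˣ, x ∈ Subgroup.zpowers ζ)
    (α : K) (hα : α ∉ Set.range (algebraMap F K)) :
    ∃! i : ℕ, (0 < i ∧ i ≤ (q + 1) / 2 ∧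
        ((ζ : K) ^ i ∉ Set.range (algebraMap F K))) ∧
      ∃ c : F, c ≠ 0 ∧
        (α = algebraMap F K c * (ζ : K) ^ i ∨
         α = algebraMap F K c * ((ζ : K) ^ i)⁻¹) := by
  classical
  have hq2 : 2 ≤ q := hq ▸ Fintype.one_lt_card
  have key := zpow_mem_range_iff q hq hK ζ hζ
  have keyN : ∀ i : ℕ, ((ζ : K) ^ i ∈ Set.range (algebraMap F K)) ↔ ((q : ℤ) + 1) ∣ (i : ℤ) := by
    intro i
    have h1 : (ζ : K) ^ i = ((ζ ^ ((i : ℕ) : ℤ) : Kˣ) : K) := by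
      rw [zpow_natCast]
      exact (Units.val_pow_eq_pow_val ζ i).symm
    rw [h1]
    exact key i
  have hα0 : α ≠ 0 := fun h => hα ⟨0, by rw [map_zero, h]⟩
  set u : Kˣ := Units.mk0 α hα0 with hu
  obtain ⟨a, ha⟩ := Subgroup.mem_zpowers_iff.mp (hζ u)
  have hαa : α = ((ζ ^ a : Kˣ) : K) := by rw [ha]; rfl
  set n : ℤ := (q : ℤ) + 1 with hn
  have hnpos : 0 < n := by omega
  set r : ℕ := (a % n).toNat with hr
  have hrval : (r : ℤ) = a % n := Int.toNat_of_nonneg (Int.emod_nonneg a (by omega))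
  have hrlt : (r : ℤ) < n := by rw [hrval]; exact Int.emod_lt_of_pos a hnpos
  have hdvd_ar : n ∣ a - (r : ℤ) := by
    refine ⟨a / n, ?_⟩
    have := Int.mul_ediv_add_emod a n
    omega
  have hr0 : r ≠ 0 := by
    intro h0
    apply hα
    rw [hαa]
    apply (key a).mpr
    have : a % n = 0 := by omega
    exact Int.dvd_of_emod_eq_zero this
  have hrltN : r < q + 1 := by omega
  have hr1 : 1 ≤ r := by omega
  set i : ℕ := min r (q + 1 - r) with hi
  have hi0 : 0 < i := by omega
  have hile : i ≤ (q + 1) / 2 := by omega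
  have hinot : ¬ ((q : ℤ) + 1) ∣ (i : ℤ) := by
    intro hd
    have h1 : (0 : ℤ) < i := by exact_mod_cast hi0
    have := Int.le_of_dvd h1 hd
    omega
  refine ⟨i, ⟨⟨hi0, hile, fun hmem => hinot ((keyN i).mp hmem)⟩, ?_⟩, ?_⟩
  · rcases le_total r (q + 1 - r) with hcase | hcase
    · have hieq : i = r := min_eq_left hcase
      obtain ⟨c, hc⟩ := (key (a - (r : ℤ))).mpr hdvd_ar
      have hc0 : c ≠ 0 := by
        intro h
        rw [h, map_zero] at hc
        exact (ζ ^ (a - (r : ℤ))).ne_zero hc.symm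
      refine ⟨c, hc0, Or.inl ?_⟩
      rw [hαa, hc, hieq]
      have h2 : (ζ ^ a : Kˣ) = ζ ^ (a - (r : ℤ)) * ζ ^ ((r : ℕ) : ℤ) := by
        rw [← zpow_add]
        congr 1
        ring
      rw [h2, Units.val_mul, zpow_natCast, Units.val_pow_eq_pow_val]
    · have hieq : i = q + 1 - r := min_eq_right hcase
      have hdvd2 : n ∣ a + ((q + 1 - r : ℕ) : ℤ) := by
        obtain ⟨t, ht⟩ := hdvd_ar
        refine ⟨t + 1, ?_⟩
        rw [mul_add, mul_one, ← ht, hn]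
        push_cast [Nat.cast_sub hrltN.le]
        ring
      obtain ⟨c, hc⟩ := (key (a + ((q + 1 - r : ℕ) : ℤ))).mpr hdvd2
      have hc0 : c ≠ 0 := by
        intro h
        rw [h, map_zero] at hc
        exact (ζ ^ (a + ((q + 1 - r : ℕ) : ℤ))).ne_zero hc.symm
      refine ⟨c, hc0, Or.inr ?_⟩
      rw [hαa, hc, hieq]
      have h2 : (ζ ^ a : Kˣ) = ζ ^ (a + ((q + 1 - r : ℕ) : ℤ)) * (ζ ^ (q + 1 - r))⁻¹ := by
        rw [← zpow_natCast ζ (q + 1 - r), ← zpow_neg, ← zpow_add]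
        congr 1
        ring
      rw [h2, Units.val_mul, Units.val_inv_eq_inv_val, Units.val_pow_eq_pow_val]
  · rintro j ⟨⟨hj0, hjle, -⟩, c, hc0, hcs⟩
    have hcne : algebraMap F K c ≠ 0 := fun h => hc0 ((algebraMap F K).injective (by rw [h, map_zero]))
    have hzj : (ζ : K) ^ j ≠ 0 := by
      rw [← Units.val_pow_eq_pow_val]
      exact (ζ ^ j).ne_zero
    rcases hcs with hcs | hcs
    · have hmem : ((ζ ^ (a - (j : ℤ)) : Kˣ) : K) ∈ Set.range (algebraMap F K) := by
        refine ⟨c, ?_⟩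
        have h2 : ((ζ ^ (a - (j : ℤ)) : Kˣ) : K) = α * ((ζ : K) ^ j)⁻¹ := by
          rw [hαa, zpow_sub, Units.val_mul]
          congr 1
          rw [zpow_natCast, ← Units.val_pow_eq_pow_val]
          exact Units.val_inv_eq_inv_val _
        rw [h2, hcs]
        field_simp
      have hd1 : n ∣ a - (j : ℤ) := (key _).mp hmem
      have hd2 : n ∣ (r : ℤ) - (j : ℤ) := by
        have h := dvd_sub hd1 hdvd_ar
        have e : (a - (j : ℤ)) - (a - (r : ℤ)) = (r : ℤ) - j := by ring
        rwa [e] at h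
      have hjq : 2 * j ≤ q + 1 := by omega
      have : (r : ℤ) - j = 0 := int_eq_zero_of_dvd hnpos hd2 (by omega) (by omega)
      omega
    · have hmem : ((ζ ^ (a + (j : ℤ)) : Kˣ) : K) ∈ Set.range (algebraMap F K) := by
        refine ⟨c, ?_⟩
        have h2 : ((ζ ^ (a + (j : ℤ)) : Kˣ) : K) = α * (ζ : K) ^ j := by
          rw [hαa, zpow_add, Units.val_mul, zpow_natCast, Units.val_pow_eq_pow_val]
        rw [h2, hcs]
        field_simp
      have hd1 : n ∣ a + (j : ℤ) := (key _).mp hmem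
      have hd2 : n ∣ (r : ℤ) + (j : ℤ) := by
        have h := dvd_sub hd1 hdvd_ar
        have e : (a + (j : ℤ)) - (a - (r : ℤ)) = (r : ℤ) + j := by ring
        rwa [e] at h
      have hjq : 2 * j ≤ q + 1 := by omega
      have : (r : ℤ) + j = n := int_eq_of_dvd hnpos hd2 (by omega) (by omega)
      omega
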